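/- Let F be an algebraically closed field and l ≥ 2. Let D denote the subgroup of GL_{2l}(F) consisting of all invertible diagonal matrices. Then the normalizer of T̄ in GL_{2l}(F) is the internal semidirect product of D by V̄; that is: D and V̄ both normalize T̄, D ∩ V̄ = {1}, and every element of N_{GL_{2l}(F)}(T̄) can be written as d·v with d ∈ D and v ∈ V̄. -/

import Mathlib

open Matrix

noncomputable section

variable (n : ℕ) (F : Type) [Field F]

/-- The antidiagonal matrix `J`: entry `(i,j)` (1-based) is `1` iff `i + j = n + 1`. -/
def Jmat : Matrix (Fin n) (Fin n) F :=
  Matrix.of fun i j => if (i : ℕ) + (j : ℕ) + 1 = n then 1 else 0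

/-- The permutation `ι` of `{1,…,n}` given (1-based) by `i ↦ n + 1 - i`. -/
def iotaPerm : Equiv.Perm (Fin n) where
  toFun i := ⟨n - 1 - (i : ℕ), by have := i.isLt; omega⟩
  invFun i := ⟨n - 1 - (i : ℕ), by have := i.isLt; omega⟩
  left_inv i := by have := i.isLt; apply Fin.ext; show n - 1 - (n - 1 - (i : ℕ)) = _; omega
  right_inv i := by have := i.isLt; apply Fin.ext; show n - 1 - (n - 1 - (i : ℕ)) = _; omega

/-- The permutation matrix `P_σ`, with `(i,j)` entry `1` iff `i = σ j`. -/
def permMat (σ : Equiv.Perm (Fin n)) : Matrix (Fin n) (Fin n) F :=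
  Matrix.of fun i j => if i = σ j then 1 else 0

lemma permMat_mul (σ τ : Equiv.Perm (Fin n)) :
    permMat n F σ * permMat n F τ = permMat n F (σ * τ) := by
  ext i j
  simp only [permMat, Matrix.mul_apply, Matrix.of_apply]
  rw [Finset.sum_eq_single (τ j)]
  · simp [Equiv.Perm.mul_apply] <;> congr
  · intro k _ hk; simp [hk]
  · intro h; simp at h

lemma permMat_one : permMat n F 1 = 1 := by
  ext i j
  simp [permMat, Matrix.one_apply] <;> congr

/-- The permutation matrix `P_σ` as an element of `GL_n(F)`. -/
def permGL (σ : Equiv.Perm (Fin n)) : GL (Fin n) F :=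
  ⟨permMat n F σ, permMat n F σ⁻¹,
    by rw [permMat_mul]; simp [permMat_one],
    by rw [permMat_mul]; simp [permMat_one]⟩

/-- The orthogonal group `O_J = {x ∈ GL_n(F) : xᵀ J x = J}` as a subgroup of `GL_n(F)`. -/
def OJ : Subgroup (GL (Fin n) F) where
  carrier := {x | (x : Matrix (Fin n) (Fin n) F)ᵀ * Jmat n F * (x : Matrix (Fin n) (Fin n) F) = Jmat n F}
  one_mem' := by simp
  mul_mem' := by
    intro a b ha hb
    simp only [Set.mem_setOf_eq] at ha hb ⊢
    rw [Units.val_mul, transpose_mul]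
    calc (b : Matrix (Fin n) (Fin n) F)ᵀ * (a : Matrix (Fin n) (Fin n) F)ᵀ * Jmat n F *
          ((a : Matrix (Fin n) (Fin n) F) * (b : Matrix (Fin n) (Fin n) F))
        = (b : Matrix (Fin n) (Fin n) F)ᵀ *
            ((a : Matrix (Fin n) (Fin n) F)ᵀ * Jmat n F * (a : Matrix (Fin n) (Fin n) F)) *
            (b : Matrix (Fin n) (Fin n) F) := by noncomm_ring
      _ = Jmat n F := by rw [ha, hb]
  inv_mem' := by
    intro a ha
    simp only [Set.mem_setOf_eq] at ha ⊢
    calc ((a⁻¹ : GL (Fin n) F) : Matrix (Fin n) (Fin n) F)ᵀ * Jmat n F *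
          ((a⁻¹ : GL (Fin n) F) : Matrix (Fin n) (Fin n) F)
        = ((a⁻¹ : GL (Fin n) F) : Matrix (Fin n) (Fin n) F)ᵀ *
            ((a : Matrix (Fin n) (Fin n) F)ᵀ * Jmat n F * (a : Matrix (Fin n) (Fin n) F)) *
            ((a⁻¹ : GL (Fin n) F) : Matrix (Fin n) (Fin n) F) := by rw [ha]
      _ = ((a : Matrix (Fin n) (Fin n) F) * ((a⁻¹ : GL (Fin n) F) : Matrix (Fin n) (Fin n) F))ᵀ *
            Jmat n F *
            ((a : Matrix (Fin n) (Fin n) F) * ((a⁻¹ : GL (Fin n) F) : Matrix (Fin n) (Fin n) F)) := by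
          rw [transpose_mul]; noncomm_ring
      _ = Jmat n F := by rw [Units.mul_inv]; simp

/-- `SL_n(F)` viewed as a subgroup of `GL_n(F)`. -/
def SLgl : Subgroup (GL (Fin n) F) where
  carrier := {x | (x : Matrix (Fin n) (Fin n) F).det = 1}
  one_mem' := by simp
  mul_mem' := by
    intro a b ha hb
    simp only [Set.mem_setOf_eq] at ha hb ⊢
    rw [Units.val_mul, det_mul, ha, hb, one_mul]
  inv_mem' := by
    intro a ha
    simp only [Set.mem_setOf_eq] at ha ⊢
    have h : ((a : Matrix (Fin n) (Fin n) F) * ((a⁻¹ : GL (Fin n) F) : Matrix (Fin n) (Fin n) F)).det = 1 := by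
      rw [Units.mul_inv]; simp
    rw [det_mul, ha, one_mul] at h
    exact h

/-- `SO_J := O_J ∩ SL_n(F)`. -/
def SOJ : Subgroup (GL (Fin n) F) := OJ n F ⊓ SLgl n F

/-- The diagonal matrices lying in a subgroup `G` of `GL_n(F)` form a subgroup. -/
def diagIn (G : Subgroup (GL (Fin n) F)) : Subgroup (GL (Fin n) F) where
  carrier := {x | x ∈ G ∧ (x : Matrix (Fin n) (Fin n) F).IsDiag}
  one_mem' := ⟨one_mem _, Matrix.isDiag_one⟩
  mul_mem' := by
    rintro a b ⟨haG, haD⟩ ⟨hbG, hbD⟩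
    refine ⟨mul_mem haG hbG, ?_⟩
    rw [Units.val_mul, ← haD.diagonal_diag, ← hbD.diagonal_diag, diagonal_mul_diagonal]
    exact isDiag_diagonal _
  inv_mem' := by
    rintro a ⟨haG, haD⟩
    refine ⟨inv_mem haG, ?_⟩
    rw [Matrix.coe_units_inv, ← haD.diagonal_diag, inv_diagonal]
    exact isDiag_diagonal _

/-- `T̄`, the subgroup of all diagonal matrices contained in `O_J`. -/
def Tbar : Subgroup (GL (Fin n) F) := diagIn n F (OJ n F)

/-- `V̄ = {P_σ : σ ∘ ι = ι ∘ σ}` as a subgroup of `GL_n(F)`. -/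
def Vbar : Subgroup (GL (Fin n) F) where
  carrier := {x | ∃ σ : Equiv.Perm (Fin n),
      σ * iotaPerm n = iotaPerm n * σ ∧ (x : Matrix (Fin n) (Fin n) F) = permMat n F σ}
  one_mem' := ⟨1, by simp, by simp [permMat_one]⟩
  mul_mem' := by
    rintro a b ⟨σ, hσ, ha⟩ ⟨τ, hτ, hb⟩
    refine ⟨σ * τ, ?_, ?_⟩
    · rw [mul_assoc, hτ, ← mul_assoc, hσ, mul_assoc]
    · rw [Units.val_mul, ha, hb, permMat_mul]
  inv_mem' := by
    rintro a ⟨σ, hσ, ha⟩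
    have hau : a = permGL n F σ := Units.ext ha
    exact ⟨σ⁻¹, (Commute.inv_left hσ : _), by rw [hau]; rfl⟩

/-- `W̄ := V̄ ∩ SL_n(F)`. -/
def Wbar : Subgroup (GL (Fin n) F) := Vbar n F ⊓ SLgl n F

end

/-- The subgroup `D` of all invertible diagonal matrices in `GL_n(F)`. -/
def diagGL (n : ℕ) (F : Type) [Field F] : Subgroup (GL (Fin n) F) := diagIn n F ⊤

section Aux

open Matrix

variable (n : ℕ) (F : Type) [Field F]

lemma iota_coe (i : Fin n) : ((iotaPerm n i : Fin n) : ℕ) = n - 1 - (i : ℕ) := rfl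

lemma iota_iota (i : Fin n) : iotaPerm n (iotaPerm n i) = i := by
  have := i.isLt
  apply Fin.ext
  rw [iota_coe, iota_coe]
  omega

lemma iota_inj {n : ℕ} {i j : Fin n} (h : iotaPerm n i = iotaPerm n j) : i = j := by
  have := congrArg (iotaPerm n) h
  rwa [iota_iota, iota_iota] at this

lemma jcond_iff (i j : Fin n) : (i : ℕ) + (j : ℕ) + 1 = n ↔ j = iotaPerm n i := by
  have hi := i.isLt
  have hj := j.isLt
  constructor
  · intro h
    apply Fin.ext
    rw [iota_coe]
    omega
  · intro h
    subst h
    rw [iota_coe]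
    omega

lemma diag_mem_OJ_iff (u : GL (Fin n) F) (f : Fin n → F)
    (hu : (u : Matrix (Fin n) (Fin n) F) = diagonal f) :
    u ∈ OJ n F ↔ ∀ i, f i * f (iotaPerm n i) = 1 := by
  have hmem : u ∈ OJ n F ↔ (u : Matrix (Fin n) (Fin n) F)ᵀ * Jmat n F *
      (u : Matrix (Fin n) (Fin n) F) = Jmat n F := Iff.rfl
  rw [hmem, hu, diagonal_transpose]
  constructor
  · intro h i
    have h2 := congrFun (congrFun h i) (iotaPerm n i)
    have hcond : (i : ℕ) + ((iotaPerm n i : Fin n) : ℕ) + 1 = n := (jcond_iff n i _).mpr rfl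
    rw [mul_diagonal, diagonal_mul] at h2
    simp only [Jmat, of_apply, hcond, if_true] at h2
    rw [← h2]; ring
  · intro h
    ext i j
    rw [mul_diagonal, diagonal_mul]
    simp only [Jmat, of_apply]
    by_cases hc : (i : ℕ) + (j : ℕ) + 1 = n
    · have : j = iotaPerm n i := (jcond_iff n i j).mp hc
      subst this
      simp only [hc, if_true]
      rw [mul_one, ← h i]
    · simp [hc]

lemma mem_Tbar_iff (u : GL (Fin n) F) :
    u ∈ Tbar n F ↔ ∃ f : Fin n → F, (u : Matrix (Fin n) (Fin n) F) = diagonal f ∧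
      ∀ i, f i * f (iotaPerm n i) = 1 := by
  constructor
  · rintro ⟨hO, hD⟩
    exact ⟨(u : Matrix (Fin n) (Fin n) F).diag, hD.diagonal_diag.symm,
      (diag_mem_OJ_iff n F u _ hD.diagonal_diag.symm).mp hO⟩
  · rintro ⟨f, hf, h1⟩
    exact ⟨(diag_mem_OJ_iff n F u f hf).mpr h1, hf ▸ isDiag_diagonal f⟩

/-- A diagonal unit built from an everywhere-nonzero diagonal function. -/
def diagUnit (d : Fin n → F) (hd : ∀ i, d i ≠ 0) : GL (Fin n) F :=
  ⟨diagonal d, diagonal fun i => (d i)⁻¹,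
   by rw [diagonal_mul_diagonal]
      have : (fun i => d i * (d i)⁻¹) = fun _ => (1 : F) :=
        funext fun i => mul_inv_cancel₀ (hd i)
      rw [this, diagonal_one],
   by rw [diagonal_mul_diagonal]
      have : (fun i => (d i)⁻¹ * d i) = fun _ => (1 : F) :=
        funext fun i => inv_mul_cancel₀ (hd i)
      rw [this, diagonal_one]⟩

@[simp] lemma diagUnit_val (d : Fin n → F) (hd : ∀ i, d i ≠ 0) :
    ((diagUnit n F d hd : GL (Fin n) F) : Matrix (Fin n) (Fin n) F) = diagonal d := rfl

lemma permMat_mul_diagonal (σ : Equiv.Perm (Fin n)) (g : Fin n → F) :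
    permMat n F σ * diagonal g = diagonal (fun i => g (σ⁻¹ i)) * permMat n F σ := by
  ext i j
  rw [mul_diagonal, diagonal_mul]
  simp only [permMat, of_apply]
  by_cases h : i = σ j
  · subst h; simp
  · simp [h]

lemma permGL_inv_val (σ : Equiv.Perm (Fin n)) :
    (((permGL n F σ)⁻¹ : GL (Fin n) F) : Matrix (Fin n) (Fin n) F) = permMat n F σ⁻¹ := rfl

lemma conj_perm_val (σ : Equiv.Perm (Fin n)) (g : Fin n → F) (hg : ∀ i, g i ≠ 0) :
    ((permGL n F σ * diagUnit n F g hg * (permGL n F σ)⁻¹ : GL (Fin n) F) :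
      Matrix (Fin n) (Fin n) F) = diagonal (fun i => g (σ⁻¹ i)) := by
  rw [Units.val_mul, Units.val_mul, permGL_inv_val, diagUnit_val]
  show permMat n F σ * diagonal g * permMat n F σ⁻¹ = _
  rw [permMat_mul_diagonal, mul_assoc, permMat_mul, mul_inv_cancel, permMat_one, mul_one]

end Aux
section Aux2

open Matrix

variable (n : ℕ) (F : Type) [Field F]

lemma conj_diag_eq (d : GL (Fin n) F) (hd : d ∈ diagGL n F) (t : GL (Fin n) F)
    (ht : t ∈ Tbar n F) : d * t * d⁻¹ = t := by
  obtain ⟨-, hdD⟩ := hd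
  obtain ⟨f, hf, -⟩ := (mem_Tbar_iff n F t).mp ht
  have hcomm : d * t = t * d := by
    apply Units.ext
    rw [Units.val_mul, Units.val_mul, hf, ← hdD.diagonal_diag, diagonal_mul_diagonal,
      diagonal_mul_diagonal]
    exact congrArg diagonal (funext fun i => mul_comm _ _)
  rw [hcomm, mul_assoc, mul_inv_cancel, mul_one]

lemma diag_le_normalizer : diagGL n F ≤ Subgroup.normalizer (Tbar n F : Set (GL (Fin n) F)) := by
  intro d hd
  rw [Subgroup.mem_normalizer_iff]
  intro t
  constructor
  · intro ht
    rw [conj_diag_eq n F d hd t ht]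
    exact ht
  · intro ht
    have h2 := conj_diag_eq n F d⁻¹ (inv_mem hd) _ ht
    rw [inv_inv] at h2
    have : d⁻¹ * (d * t * d⁻¹) * d = t := by group
    rw [this] at h2
    rwa [← h2] at ht

lemma conj_perm_mem (v : GL (Fin n) F) (hv : v ∈ Vbar n F) (t : GL (Fin n) F)
    (ht : t ∈ Tbar n F) : v * t * v⁻¹ ∈ Tbar n F := by
  obtain ⟨σ, hσ, hval⟩ := hv
  obtain ⟨f, hf, h1⟩ := (mem_Tbar_iff n F t).mp ht
  have hvu : v = permGL n F σ := Units.ext hval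
  have hf0 : ∀ i, f i ≠ 0 := fun i => left_ne_zero_of_mul_eq_one (h1 i)
  have htu : t = diagUnit n F f hf0 := Units.ext (by rw [hf]; rfl)
  have hcomm : σ⁻¹ * iotaPerm n = iotaPerm n * σ⁻¹ := (Commute.inv_left (hσ : Commute σ _) : _)
  rw [mem_Tbar_iff]
  refine ⟨fun i => f (σ⁻¹ i), ?_, ?_⟩
  · rw [hvu, htu]
    exact conj_perm_val n F σ f hf0
  · intro i
    have h2 : σ⁻¹ (iotaPerm n i) = iotaPerm n (σ⁻¹ i) := by
      have := congrArg (fun p : Equiv.Perm (Fin n) => p i) hcomm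
      simpa [Equiv.Perm.mul_apply] using this
    show f (σ⁻¹ i) * f (σ⁻¹ (iotaPerm n i)) = 1
    rw [h2]
    exact h1 _

lemma Vbar_le_normalizer : Vbar n F ≤ Subgroup.normalizer (Tbar n F : Set (GL (Fin n) F)) := by
  intro v hv
  rw [Subgroup.mem_normalizer_iff]
  intro t
  constructor
  · exact conj_perm_mem n F v hv t
  · intro ht
    have h2 := conj_perm_mem n F v⁻¹ (inv_mem hv) _ ht
    have : v⁻¹ * (v * t * v⁻¹) * v⁻¹⁻¹ = t := by group
    rwa [this] at h2

lemma diag_inf_Vbar : diagGL n F ⊓ Vbar n F = ⊥ := by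
  rw [Subgroup.eq_bot_iff_forall]
  rintro x ⟨⟨-, hD⟩, σ, -, hx⟩
  have hσ1 : ∀ j, σ j = j := by
    intro j
    by_contra h
    have h2 : (x : Matrix (Fin n) (Fin n) F) (σ j) j = 0 := hD (fun hc => h hc)
    rw [hx] at h2
    simp only [permMat, of_apply, if_pos rfl] at h2
    exact one_ne_zero h2
  apply Units.ext
  rw [hx, Units.val_one]
  ext i j
  simp [permMat, Matrix.one_apply, hσ1 j]

end Aux2
section Aux3

open Matrix

lemma exists_good (F : Type) [Field F] [Infinite F] (m : ℕ) :
    ∃ g : Fin m → F, Function.Injective g ∧ (∀ i, g i ≠ 0) ∧ ∀ i j, g i * g j ≠ 1 := by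
  classical
  induction m with
  | zero => exact ⟨fun i => 0, fun i => i.elim0, fun i => i.elim0, fun i => i.elim0⟩
  | succ k ih =>
    obtain ⟨g, hginj, hg0, hg1⟩ := ih
    obtain ⟨a, ha⟩ := Infinite.exists_notMem_finset
      ((Finset.univ.image g) ∪ (Finset.univ.image fun i => (g i)⁻¹) ∪ {0, 1, -1})
    simp only [Finset.mem_union, Finset.mem_image, Finset.mem_univ, true_and,
      Finset.mem_insert, Finset.mem_singleton, not_or, not_exists] at ha
    obtain ⟨⟨hag, hagi⟩, ha0, ha1, han1⟩ := ha
    refine ⟨Fin.snoc g a, ?_, ?_, ?_⟩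
    · intro i j hij
      rcases Fin.eq_castSucc_or_eq_last i with ⟨i', rfl⟩ | rfl <;>
        rcases Fin.eq_castSucc_or_eq_last j with ⟨j', rfl⟩ | rfl
      · rw [Fin.snoc_castSucc, Fin.snoc_castSucc] at hij
        rw [hginj hij]
      · rw [Fin.snoc_castSucc, Fin.snoc_last] at hij
        exact absurd hij (hag i')
      · rw [Fin.snoc_castSucc, Fin.snoc_last] at hij
        exact absurd hij.symm (hag j')
      · rfl
    · intro i
      rcases Fin.eq_castSucc_or_eq_last i with ⟨i', rfl⟩ | rfl
      · rw [Fin.snoc_castSucc]; exact hg0 i'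
      · rw [Fin.snoc_last]; exact ha0
    · intro i j
      rcases Fin.eq_castSucc_or_eq_last i with ⟨i', rfl⟩ | rfl <;>
        rcases Fin.eq_castSucc_or_eq_last j with ⟨j', rfl⟩ | rfl
      · rw [Fin.snoc_castSucc, Fin.snoc_castSucc]; exact hg1 i' j'
      · rw [Fin.snoc_castSucc, Fin.snoc_last]
        intro h
        exact hagi i' (eq_inv_of_mul_eq_one_right h).symm
      · rw [Fin.snoc_castSucc, Fin.snoc_last]
        intro h
        exact hagi j' (eq_inv_of_mul_eq_one_left h).symm
      · rw [Fin.snoc_last]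
        intro h
        rcases mul_self_eq_one_iff.mp h with h1 | h1
        · exact ha1 h1
        · exact han1 h1

/-- The special injective element of `T̄`'s parameter space. -/
lemma exists_regular (F : Type) [Field F] [Infinite F] (l : ℕ) (hl : 1 ≤ l) :
    ∃ f : Fin (2 * l) → F, Function.Injective f ∧
      ∀ i, f i * f (iotaPerm (2 * l) i) = 1 := by
  obtain ⟨g, hginj, hg0, hg1⟩ := exists_good F l
  set n := 2 * l with hn
  have hιc : ∀ i : Fin n, ((iotaPerm n i : Fin n) : ℕ) = n - 1 - (i : ℕ) := fun i => rfl
  refine ⟨fun i => if h : (i : ℕ) < l then g ⟨i, h⟩ else (g ⟨n - 1 - (i : ℕ), by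
      have := i.isLt; omega⟩)⁻¹, ?_, ?_⟩
  · intro i j hij
    have hi := i.isLt
    have hj := j.isLt
    by_cases h1 : (i : ℕ) < l <;> by_cases h2 : (j : ℕ) < l <;>
      simp only [h1, h2, dif_pos, dif_neg, not_lt, dite_true, dite_false] at hij
    · exact Fin.ext (congrArg (fun x : Fin l => (x : ℕ)) (hginj hij))
    · exfalso
      apply hg1 ⟨i, h1⟩ ⟨n - 1 - (j : ℕ), by omega⟩
      rw [hij, inv_mul_cancel₀ (hg0 _)]
    · exfalso
      apply hg1 ⟨j, h2⟩ ⟨n - 1 - (i : ℕ), by omega⟩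
      rw [← hij, inv_mul_cancel₀ (hg0 _)]
    · have := hginj (inv_injective hij)
      have h3 := congrArg (fun x : Fin l => (x : ℕ)) this
      simp only at h3
      apply Fin.ext
      omega
  · intro i
    dsimp only
    have hi := i.isLt
    have hl2 : 1 ≤ n := by omega
    by_cases h1 : (i : ℕ) < l
    · have h2 : ¬ ((iotaPerm n i : Fin n) : ℕ) < l := by rw [hιc]; omega
      rw [dif_pos h1, dif_neg h2]
      have h3 : (⟨n - 1 - ((iotaPerm n i : Fin n) : ℕ), by rw [hιc]; omega⟩ : Fin l) = ⟨(i : ℕ), h1⟩ := by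
        apply Fin.ext
        simp only [hιc]
        omega
      rw [h3, mul_inv_cancel₀ (hg0 _)]
    · have h2 : ((iotaPerm n i : Fin n) : ℕ) < l := by rw [hιc]; omega
      rw [dif_neg h1, dif_pos h2]
      have h3 : (⟨((iotaPerm n i : Fin n) : ℕ), h2⟩ : Fin l) =
          ⟨n - 1 - (i : ℕ), by omega⟩ := by
        apply Fin.ext
        simp only [hιc]
      rw [h3, inv_mul_cancel₀ (hg0 _)]

end Aux3
section Aux4

open Matrix

lemma norm_decomp (F : Type) [Field F] [Infinite F] (l : ℕ) (hl : 1 ≤ l)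
    (x : GL (Fin (2 * l)) F) (hx : x ∈ Subgroup.normalizer (Tbar (2 * l) F : Set (GL (Fin (2 * l)) F))) :
    ∃ d ∈ diagGL (2 * l) F, ∃ v ∈ Vbar (2 * l) F, x = d * v := by
  obtain ⟨f, hfinj, hf1⟩ := exists_regular F l hl
  have hf0 : ∀ i, f i ≠ 0 := fun i => left_ne_zero_of_mul_eq_one (hf1 i)
  set t := diagUnit (2*l) F f hf0 with hts
  have htT : t ∈ Tbar (2*l) F := (mem_Tbar_iff (2*l) F t).mpr ⟨f, rfl, hf1⟩
  have ht' : x * t * x⁻¹ ∈ Tbar (2*l) F := (Subgroup.mem_normalizer_iff.mp hx t).mp htT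
  obtain ⟨f', hval', hprop'⟩ := (mem_Tbar_iff (2*l) F _).mp ht'
  have hmulu : (x * t * x⁻¹) * x = x * t := by group
  have hint : diagonal f' * (x : Matrix (Fin (2*l)) (Fin (2*l)) F) =
      (x : Matrix (Fin (2*l)) (Fin (2*l)) F) * diagonal f := by
    have h := congrArg (Units.val) hmulu
    rw [Units.val_mul, hval', Units.val_mul] at h
    exact h
  have hent : ∀ i j, f' i * (x : Matrix (Fin (2*l)) (Fin (2*l)) F) i j =
      (x : Matrix (Fin (2*l)) (Fin (2*l)) F) i j * f j := by
    intro i j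
    have h := congrFun (congrFun hint i) j
    rwa [diagonal_mul, mul_diagonal] at h
  have hdet : ((x : Matrix (Fin (2*l)) (Fin (2*l)) F)).det ≠ 0 := by
    have hu : IsUnit (x : Matrix (Fin (2*l)) (Fin (2*l)) F) := x.isUnit
    exact (((Matrix.isUnit_iff_isUnit_det _).mp hu)).ne_zero
  have hrow : ∀ i, ∃ j, (x : Matrix (Fin (2*l)) (Fin (2*l)) F) i j ≠ 0 := by
    intro i
    by_contra h
    push_neg at h
    exact hdet (Matrix.det_eq_zero_of_row_eq_zero i h)
  set c : Fin (2*l) → Fin (2*l) := fun i => (hrow i).choose with hcdef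
  have hc : ∀ i, (x : Matrix (Fin (2*l)) (Fin (2*l)) F) i (c i) ≠ 0 := fun i => (hrow i).choose_spec
  have hval_eq : ∀ i j, (x : Matrix (Fin (2*l)) (Fin (2*l)) F) i j ≠ 0 → f' i = f j := by
    intro i j hj
    have e1 : f' i * (x : Matrix (Fin (2*l)) (Fin (2*l)) F) i j =
        f j * (x : Matrix (Fin (2*l)) (Fin (2*l)) F) i j := by rw [hent i j]; ring
    exact mul_right_cancel₀ hj e1
  have huniq : ∀ i j, (x : Matrix (Fin (2*l)) (Fin (2*l)) F) i j ≠ 0 → j = c i := by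
    intro i j hj
    have h1 := hval_eq i j hj
    have h2 := hval_eq i (c i) (hc i)
    exact hfinj (h1 ▸ h2 ▸ rfl)
  have hcinj : Function.Injective c := by
    by_contra hni
    have hns : ¬ ∀ b, ∃ a, c a = b := fun hs =>
      hni (Finite.injective_iff_surjective.mpr hs)
    push_neg at hns
    obtain ⟨k, hk⟩ := hns
    apply hdet
    apply Matrix.det_eq_zero_of_column_eq_zero k
    intro i
    by_contra hz
    exact hk i (huniq i k hz).symm
  set e : Fin (2*l) ≃ Fin (2*l) := Equiv.ofBijective c (Finite.injective_iff_bijective.mp hcinj)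
    with hedef
  set σ : Equiv.Perm (Fin (2*l)) := e.symm with hσdef
  have hec : ∀ i, e i = c i := fun i => rfl
  set d : Fin (2*l) → F := fun i => (x : Matrix (Fin (2*l)) (Fin (2*l)) F) i (c i) with hddef
  have hd0 : ∀ i, d i ≠ 0 := hc
  have hxval : (x : Matrix (Fin (2*l)) (Fin (2*l)) F) = diagonal d * permMat (2*l) F σ := by
    ext i j
    rw [diagonal_mul]
    simp only [permMat, of_apply]
    by_cases hij : i = σ j
    · rw [if_pos hij, mul_one]
      have hji : j = c i := by
        rw [hij, hσdef]
        rw [← hec (e.symm j), Equiv.apply_symm_apply]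
      rw [hji]
    · rw [if_neg hij, mul_zero]
      by_contra h
      apply hij
      have hji := huniq i j h
      rw [hji, hσdef]
      rw [← hec i, Equiv.symm_apply_apply]
  set D := diagUnit (2*l) F d hd0 with hDdef
  set V := permGL (2*l) F σ with hVdef
  have hxDV : x = D * V := Units.ext (by rw [Units.val_mul]; exact hxval)
  have hDmem : D ∈ diagGL (2*l) F := ⟨Subgroup.mem_top D, isDiag_diagonal d⟩
  have hVnorm : V ∈ Subgroup.normalizer (Tbar (2*l) F : Set (GL (Fin (2*l)) F)) := by
    have hDnorm := diag_le_normalizer (2*l) F hDmem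
    have hVeq : V = D⁻¹ * x := by rw [hxDV]; group
    rw [hVeq]
    exact mul_mem (inv_mem hDnorm) hx
  obtain ⟨g1, -, hg10, hg11⟩ := exists_good F 1
  set a : F := g1 ⟨0, Nat.zero_lt_one⟩ with hadef
  have ha0 : a ≠ 0 := hg10 _
  have ha1 : a * a ≠ 1 := hg11 _ _
  have hιne : ∀ j : Fin (2*l), iotaPerm (2*l) j ≠ j := by
    intro j h
    have hj := j.isLt
    have h2 := congrArg Fin.val h
    rw [iota_coe] at h2
    omega
  have hkey : ∀ j : Fin (2*l), σ⁻¹ (iotaPerm (2*l) (σ j)) = iotaPerm (2*l) j := by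
    intro j
    classical
    set g : Fin (2*l) → F := fun k => if k = j then a else if k = iotaPerm (2*l) j then a⁻¹ else 1
      with hgdef
    have hgj : g j = a := by rw [hgdef]; simp
    have hgιj : g (iotaPerm (2*l) j) = a⁻¹ := by rw [hgdef]; simp [hιne j]
    have hgother : ∀ k, k ≠ j → k ≠ iotaPerm (2*l) j → g k = 1 := by
      intro k h1 h2
      rw [hgdef]
      simp [h1, h2]
    have hgprop : ∀ k, g k * g (iotaPerm (2*l) k) = 1 := by
      intro k
      by_cases h1 : k = j
      · subst h1
        rw [hgj, hgιj, mul_inv_cancel₀ ha0]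
      · by_cases h2 : k = iotaPerm (2*l) j
        · subst h2
          rw [hgιj, iota_iota, hgj, inv_mul_cancel₀ ha0]
        · have h3 : iotaPerm (2*l) k ≠ j := by
            intro h
            exact h2 (by rw [← h, iota_iota])
          have h4 : iotaPerm (2*l) k ≠ iotaPerm (2*l) j := fun h => h1 (iota_inj h)
          rw [hgother k h1 h2, hgother _ h3 h4, one_mul]
    have hg0' : ∀ k, g k ≠ 0 := by
      intro k
      by_cases h1 : k = j
      · rw [h1, hgj]; exact ha0
      · by_cases h2 : k = iotaPerm (2*l) j
        · rw [h2, hgιj]; exact inv_ne_zero ha0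
        · rw [hgother k h1 h2]; exact one_ne_zero
    have htgT : diagUnit (2*l) F g hg0' ∈ Tbar (2*l) F :=
      (mem_Tbar_iff (2*l) F _).mpr ⟨g, rfl, hgprop⟩
    have hconj : V * diagUnit (2*l) F g hg0' * V⁻¹ ∈ Tbar (2*l) F :=
      (Subgroup.mem_normalizer_iff.mp hVnorm _).mp htgT
    have hOJ : V * diagUnit (2*l) F g hg0' * V⁻¹ ∈ OJ (2*l) F := hconj.1
    have hdOJ := (diag_mem_OJ_iff (2*l) F _ (fun i => g (σ⁻¹ i))
      (conj_perm_val (2*l) F σ g hg0')).mp hOJ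
    have h5 := hdOJ (σ j)
    rw [show σ⁻¹ (σ j) = j from σ.symm_apply_apply j] at h5
    rw [hgj] at h5
    set k := σ⁻¹ (iotaPerm (2*l) (σ j)) with hkdef
    by_cases hk1 : k = j
    · exfalso
      rw [hk1, hgj] at h5
      exact ha1 h5
    · by_cases hk2 : k = iotaPerm (2*l) j
      · exact hk2
      · exfalso
        rw [hgother k hk1 hk2, mul_one] at h5
        rw [h5] at ha1
        exact ha1 (one_mul 1)
  have hσι : σ * iotaPerm (2*l) = iotaPerm (2*l) * σ := by
    apply Equiv.ext
    intro j
    have h1 := hkey j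
    have h2 := congrArg σ h1
    rw [show σ (σ⁻¹ (iotaPerm (2*l) (σ j))) = iotaPerm (2*l) (σ j) from σ.apply_symm_apply _] at h2
    show σ (iotaPerm (2*l) j) = iotaPerm (2*l) (σ j)
    exact h2.symm ▸ rfl
  exact ⟨D, hDmem, V, ⟨σ, hσι, rfl⟩, hxDV⟩

end Aux4
/-- For `F` algebraically closed and `l ≥ 2`, the normalizer of `T̄` in
`GL_{2l}(F)` is the internal semidirect product of `D` (invertible diagonal matrices) by `V̄`. -/
theorem normalizer_Tbar_in_GL_eq_diag_mul_Vbar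
    (F : Type) [Field F] [IsAlgClosed F] (l : ℕ) (hl : 2 ≤ l) :
    diagGL (2 * l) F ≤ Subgroup.normalizer (Tbar (2 * l) F : Set (GL (Fin (2 * l)) F)) ∧
    Vbar (2 * l) F ≤ Subgroup.normalizer (Tbar (2 * l) F : Set (GL (Fin (2 * l)) F)) ∧
    diagGL (2 * l) F ⊓ Vbar (2 * l) F = ⊥ ∧
    ∀ x ∈ Subgroup.normalizer (Tbar (2 * l) F : Set (GL (Fin (2 * l)) F)),
      ∃ d ∈ diagGL (2 * l) F, ∃ v ∈ Vbar (2 * l) F, x = d * v := by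
  have hinf : Infinite F := inferInstance
  exact ⟨diag_le_normalizer (2 * l) F, Vbar_le_normalizer (2 * l) F,
    diag_inf_Vbar (2 * l) F, fun x hx => norm_decomp F l (by omega) x hx⟩
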